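/- Let A be a real symmetric positive semidefinite k×k matrix, c ∈ ℝ^k, and t ∈ ℝ. The bordered matrix [[A, c],[cᵀ, t]] is positive semidefinite and has the same rank as A if and only if c = Aw for some w ∈ ℝ^k and t = cᵀ A† c, where A† is the Moore–Penrose inverse. -/

import Mathlib

open Matrix

private lemma aux_quad_zero (a t : ℝ) (h : ∀ s : ℝ, 0 ≤ 2 * s * a + s ^ 2 * t) : a = 0 := by
  rcases le_or_gt t 0 with ht | ht
  · have h1 := h a
    have h2 := h (-a)
    nlinarith [sq_nonneg a]
  · have h1 := h (-a / t)
    have key : 2 * (-a / t) * a + (-a / t) ^ 2 * t = -(a ^ 2) / t := by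
      field_simp; ring
    rw [key] at h1
    have : a ^ 2 ≤ 0 := by
      rw [div_nonneg_iff] at h1
      rcases h1 with ⟨h1, _⟩ | ⟨_, h2⟩ <;> nlinarith
    nlinarith [sq_nonneg a]

private lemma aux_finrank_prod {k : ℕ} (p : Submodule ℝ (Fin k → ℝ)) (q : Submodule ℝ (Fin 1 → ℝ)) :
    Module.finrank ℝ (p.prod q) = Module.finrank ℝ p + Module.finrank ℝ q := by
  have e : (p.prod q) ≃ₗ[ℝ] p × q :=
    { toFun := fun x => (⟨x.1.1, x.2.1⟩, ⟨x.1.2, x.2.2⟩)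
      invFun := fun y => ⟨(y.1.1, y.2.1), ⟨y.1.2, y.2.2⟩⟩
      left_inv := fun x => rfl
      right_inv := fun y => rfl
      map_add' := fun x y => rfl
      map_smul' := fun r x => rfl }
  rw [e.finrank_eq, Module.finrank_prod]

private lemma aux_rank_blockdiag {k : ℕ} (A : Matrix (Fin k) (Fin k) ℝ)
    (D : Matrix (Fin 1) (Fin 1) ℝ) :
    (fromBlocks A 0 0 D).rank = A.rank + D.rank := by
  classical
  set e := LinearEquiv.sumArrowLequivProdArrow (Fin k) (Fin 1) ℝ ℝ with he
  have key : (fromBlocks A 0 0 D).mulVecLin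
      = e.symm.toLinearMap ∘ₗ (A.mulVecLin.prodMap D.mulVecLin) ∘ₗ e.toLinearMap := by
    apply LinearMap.ext; intro v
    show (fromBlocks A 0 0 D) *ᵥ v = _
    conv_lhs => rw [← Sum.elim_comp_inl_inr v]
    rw [fromBlocks_mulVec]
    simp [e, LinearEquiv.sumArrowLequivProdArrow, Equiv.sumArrowEquivProdArrow]
  have hrange : LinearMap.range (A.mulVecLin.prodMap D.mulVecLin)
      = (LinearMap.range A.mulVecLin).prod (LinearMap.range D.mulVecLin) := by
    ext x
    constructor
    · rintro ⟨v, rfl⟩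
      exact ⟨⟨v.1, rfl⟩, ⟨v.2, rfl⟩⟩
    · rintro ⟨⟨a, ha⟩, ⟨b, hb⟩⟩
      exact ⟨(a, b), Prod.ext ha hb⟩
  rw [Matrix.rank, Matrix.rank, Matrix.rank, key, LinearMap.range_comp,
    LinearMap.range_comp_of_range_eq_top _ (LinearEquiv.range e),
    LinearEquiv.finrank_map_eq, hrange, aux_finrank_prod]

private lemma aux_congr {k : ℕ} (A : Matrix (Fin k) (Fin k) ℝ) (hs : Aᵀ = A)
    (w c : Fin k → ℝ) (hc : A *ᵥ w = c) (t : ℝ) :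
    (Matrix.fromBlocks A (Matrix.of fun i (_ : Fin 1) => c i)
        (Matrix.of fun (_ : Fin 1) j => c j) (Matrix.of fun (_ _ : Fin 1) => t))
      = (fromBlocks 1 (Matrix.of fun i (_ : Fin 1) => w i) 0 1)ᵀ
        * (fromBlocks A 0 0 (Matrix.of fun (_ _ : Fin 1) => t - c ⬝ᵥ w))
        * (fromBlocks 1 (Matrix.of fun i (_ : Fin 1) => w i) 0 1) := by
  have hb : A * (Matrix.of fun i (_ : Fin 1) => w i) = Matrix.of fun i (_ : Fin 1) => c i := by
    ext i j
    simpa [mul_apply, mulVec, dotProduct] using congrFun hc i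
  have hbt : (Matrix.of fun i (_ : Fin 1) => w i)ᵀ * A = Matrix.of fun (_ : Fin 1) j => c j := by
    have h := congrArg Matrix.transpose hb
    rw [transpose_mul, hs] at h
    rw [h]; ext i j; simp
  have hd : (Matrix.of fun (_ : Fin 1) j => c j) * (Matrix.of fun i (_ : Fin 1) => w i)
      + (Matrix.of fun (_ _ : Fin 1) => t - c ⬝ᵥ w) = Matrix.of fun (_ _ : Fin 1) => t := by
    ext i j
    simp [mul_apply, dotProduct]
  rw [fromBlocks_transpose, fromBlocks_multiply, fromBlocks_multiply]
  simp only [transpose_one, transpose_zero, Matrix.one_mul, Matrix.mul_one,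
    Matrix.zero_mul, Matrix.mul_zero, add_zero, zero_add, Matrix.mul_assoc, hb, hbt, hd]

private lemma aux_detM {k : ℕ} (w : Fin k → ℝ) :
    IsUnit (fromBlocks (1 : Matrix (Fin k) (Fin k) ℝ)
      (Matrix.of fun i (_ : Fin 1) => w i) 0 1).det := by
  rw [det_fromBlocks_zero₂₁]
  simp

private lemma aux_conjT {m n : Type*} (M : Matrix m n ℝ) : Mᴴ = Mᵀ := by
  ext i j; simp [conjTranspose_apply]

theorem stmt_5 {k : ℕ} (A : Matrix (Fin k) (Fin k) ℝ) (hA : A.PosSemidef)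
    (c : Fin k → ℝ) (t : ℝ)
    (Ad : Matrix (Fin k) (Fin k) ℝ)
    (h1 : A * Ad * A = A) (h2 : Ad * A * Ad = Ad)
    (h3 : (A * Ad)ᵀ = A * Ad) (h4 : (Ad * A)ᵀ = Ad * A) :
    ((Matrix.fromBlocks A (Matrix.of fun i (_ : Fin 1) => c i)
        (Matrix.of fun (_ : Fin 1) j => c j) (Matrix.of fun (_ _ : Fin 1) => t)).PosSemidef ∧
      (Matrix.fromBlocks A (Matrix.of fun i (_ : Fin 1) => c i)
        (Matrix.of fun (_ : Fin 1) j => c j) (Matrix.of fun (_ _ : Fin 1) => t)).rank =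
          A.rank) ↔
      ((∃ w : Fin k → ℝ, c = A *ᵥ w) ∧ t = c ⬝ᵥ (Ad *ᵥ c)) := by
  have hs : Aᵀ = A := by
    rw [← aux_conjT]; exact hA.1
  set B := Matrix.fromBlocks A (Matrix.of fun i (_ : Fin 1) => c i)
      (Matrix.of fun (_ : Fin 1) j => c j) (Matrix.of fun (_ _ : Fin 1) => t) with hB
  set M := fromBlocks (1 : Matrix (Fin k) (Fin k) ℝ)
      (Matrix.of fun i (_ : Fin 1) => (Ad *ᵥ c) i) 0 (1 : Matrix (Fin 1) (Fin 1) ℝ) with hM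
  constructor
  · rintro ⟨hpsd, hrank⟩
    -- step 1 : c is in the range of A
    have e1 : A * Adᵀ * A = A := by
      have h := congrArg Matrix.transpose h1
      rwa [transpose_mul, transpose_mul, hs, ← Matrix.mul_assoc] at h
    have e2 : A * (A * Ad) = A := by
      rw [← h3, transpose_mul, hs, ← Matrix.mul_assoc, e1]
    set r : Fin k → ℝ := c - (A * Ad) *ᵥ c with hr
    have hAr : A *ᵥ r = 0 := by
      rw [hr, Matrix.mulVec_sub, Matrix.mulVec_mulVec, e2, sub_self]
    -- quadratic form evaluation
    have hquad : ∀ s : ℝ, 0 ≤ 2 * s * (c ⬝ᵥ r) + s ^ 2 * t := by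
      intro s
      have h := hpsd.dotProduct_mulVec_nonneg (Sum.elim r (fun _ : Fin 1 => s))
      rw [hB] at h
      rw [fromBlocks_mulVec] at h
      simp [sumElim_dotProduct_sumElim, mulVec, dotProduct, Fin.sum_univ_one, hAr] at h
      have hsum : ∑ x : Fin k, r x * (c x * s) = s * (c ⬝ᵥ r) := by
        simp only [dotProduct, Finset.mul_sum]
        exact Finset.sum_congr rfl fun i _ => by ring
      have hsum2 : (∑ x : Fin k, c x * r x) = c ⬝ᵥ r := rfl
      rw [hsum, hsum2] at h
      nlinarith [h]
    have hcr : c ⬝ᵥ r = 0 := aux_quad_zero _ _ hquad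
    have hPr : (A * Ad) *ᵥ r = 0 := by
      have hfac : A * Ad = Adᵀ * A := by
        rw [← h3, transpose_mul, hs]
      rw [hfac, ← Matrix.mulVec_mulVec, hAr, Matrix.mulVec_zero]
    have hrr : r ⬝ᵥ r = 0 := by
      have : r ⬝ᵥ r = c ⬝ᵥ r - ((A * Ad) *ᵥ c) ⬝ᵥ r := by
        rw [hr]; rw [sub_dotProduct]
      rw [this, hcr]
      have : ((A * Ad) *ᵥ c) ⬝ᵥ r = ((A * Ad)ᵀ *ᵥ r) ⬝ᵥ c := by
        rw [dotProduct_comm, dotProduct_mulVec, ← mulVec_transpose]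
      rw [this, h3, hPr, zero_dotProduct, sub_zero]
    have hr0 : r = 0 := dotProduct_self_eq_zero.mp hrr
    have hcw : A *ᵥ (Ad *ᵥ c) = c := by
      have h0 : c - (A * Ad) *ᵥ c = 0 := by rw [← hr]; exact hr0
      rw [Matrix.mulVec_mulVec]
      exact (sub_eq_zero.mp h0).symm
    refine ⟨⟨Ad *ᵥ c, hcw.symm⟩, ?_⟩
    -- step 2 : rank forces t = c ⬝ᵥ Ad c
    by_contra hne
    have hδ : t - c ⬝ᵥ (Ad *ᵥ c) ≠ 0 := sub_ne_zero.mpr hne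
    have hcong := aux_congr A hs (Ad *ᵥ c) c hcw t
    rw [← hB, ← hM] at hcong
    have hrB : B.rank = A.rank + (Matrix.of fun (_ _ : Fin 1) => t - c ⬝ᵥ (Ad *ᵥ c)).rank := by
      rw [hcong, Matrix.mul_assoc, rank_mul_eq_right_of_isUnit_det _ _ (by rw [hM, det_transpose]; exact aux_detM _),
        rank_mul_eq_left_of_isUnit_det _ _ (aux_detM _), aux_rank_blockdiag]
    have hδrank : (Matrix.of fun (_ _ : Fin 1) => t - c ⬝ᵥ (Ad *ᵥ c)).rank = 1 := by
      rw [Matrix.rank_of_isUnit]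
      · simp
      · rw [Matrix.isUnit_iff_isUnit_det, Matrix.det_fin_one]
        exact hδ.isUnit
    rw [hrank, hδrank] at hrB
    omega
  · rintro ⟨⟨w₀, hw₀⟩, ht⟩
    have hcw : A *ᵥ (Ad *ᵥ c) = c := by
      rw [hw₀, Matrix.mulVec_mulVec, Matrix.mulVec_mulVec, h1]
    have hcong := aux_congr A hs (Ad *ᵥ c) c hcw t
    rw [← hB, ← hM] at hcong
    have hδ0 : (Matrix.of fun (_ _ : Fin 1) => t - c ⬝ᵥ (Ad *ᵥ c))
        = (0 : Matrix (Fin 1) (Fin 1) ℝ) := by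
      ext i j; simp [ht]
    rw [hδ0] at hcong
    constructor
    · rw [hcong]
      have hD : (fromBlocks A 0 0 (0 : Matrix (Fin 1) (Fin 1) ℝ)).PosSemidef := by
        refine Matrix.PosSemidef.of_dotProduct_mulVec_nonneg ?_ ?_
        · rw [isHermitian_fromBlocks_iff]
          exact ⟨hA.1, by simp, by simp, by simp [Matrix.IsHermitian]⟩
        · intro x
          rw [← Sum.elim_comp_inl_inr x, fromBlocks_mulVec]
          rw [Function.star_sumElim, sumElim_dotProduct_sumElim]
          simp only [Sum.elim_comp_inl, Sum.elim_comp_inr, Matrix.zero_mulVec, add_zero,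
            zero_add, dotProduct_zero]
          exact hA.dotProduct_mulVec_nonneg _
      have := hD.conjTranspose_mul_mul_same M
      rwa [aux_conjT] at this
    · rw [hcong, Matrix.mul_assoc,
        rank_mul_eq_right_of_isUnit_det _ _ (by rw [hM, det_transpose]; exact aux_detM _),
        rank_mul_eq_left_of_isUnit_det _ _ (aux_detM _), aux_rank_blockdiag,
        Matrix.rank_zero, add_zero]
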